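/- Let M be a symmetric positive definite n×n real matrix, let L be any n×n real matrix, let α > 0, and let Θ_y, Θ_w, Θ_v be n×n diagonal matrices with strictly positive diagonal entries. Then the Schur complement S := L (M + Θ_y)⁻¹ Lᵀ + (1/α) M − (1/α²) (Θ_w⁻¹ + Θ_v⁻¹ + (1/α) M⁻¹)⁻¹ is symmetric positive definite; in particular it is the sum of the symmetric positive semidefinite matrix L (M + Θ_y)⁻¹ Lᵀ and the symmetric positive definite matrix (1/α) M − (1/α²) (Θ_w⁻¹ + Θ_v⁻¹ + (1/α) M⁻¹)⁻¹. -/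

import Mathlib

open Matrix

section Aux

variable {n : ℕ}

lemma posDef_smul_aux {A : Matrix (Fin n) (Fin n) ℝ} (hA : A.PosDef) {c : ℝ} (hc : 0 < c) :
    (c • A).PosDef := by
  refine PosDef.of_dotProduct_mulVec_pos ?_ fun x hx => ?_
  · have h1 := hA.1.eq
    rw [conjTranspose_eq_transpose_of_trivial] at h1
    simp [Matrix.IsHermitian, h1]
  · rw [smul_mulVec, dotProduct_smul]
    exact mul_pos hc (hA.dotProduct_mulVec_pos hx)

lemma posDef_conj_aux {A B : Matrix (Fin n) (Fin n) ℝ} (hA : A.PosDef) (hB : IsUnit B) :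
    (Bᴴ * A * B).PosDef := by
  refine PosDef.of_dotProduct_mulVec_pos (hA.posSemidef.conjTranspose_mul_mul_same B).1 fun x hx => ?_
  have hx' : B *ᵥ x ≠ 0 := by
    refine (Matrix.mulVec_injective_iff_isUnit.mpr hB |>.ne_iff' ?_).2 hx
    simp
  simpa only [star_mulVec, dotProduct_mulVec, vecMul_vecMul] using hA.dotProduct_mulVec_pos hx'

lemma posDef_conj_aux' {A B : Matrix (Fin n) (Fin n) ℝ} (hA : A.PosDef) (hB : IsUnit B) :
    (B * A * Bᴴ).PosDef := by
  simpa only [conjTranspose_conjTranspose] using posDef_conj_aux hA (by simpa using hB.map (conjTransposeRingEquiv (Fin n) ℝ) : IsUnit Bᴴ)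

end Aux

theorem schur_complement_posdef {n : ℕ}
    (M : Matrix (Fin n) (Fin n) ℝ) (hM : M.PosDef)
    (L : Matrix (Fin n) (Fin n) ℝ)
    (α : ℝ) (hα : 0 < α)
    (dy dw dv : Fin n → ℝ)
    (hdy : ∀ i, 0 < dy i) (hdw : ∀ i, 0 < dw i) (hdv : ∀ i, 0 < dv i) :
    (L * (M + Matrix.diagonal dy)⁻¹ * Lᵀ +
      (α⁻¹ • M - (α ^ 2)⁻¹ •
        ((Matrix.diagonal dw)⁻¹ + (Matrix.diagonal dv)⁻¹ + α⁻¹ • M⁻¹)⁻¹)).PosDef ∧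
    (L * (M + Matrix.diagonal dy)⁻¹ * Lᵀ).PosSemidef ∧
    (α⁻¹ • M - (α ^ 2)⁻¹ •
      ((Matrix.diagonal dw)⁻¹ + (Matrix.diagonal dv)⁻¹ + α⁻¹ • M⁻¹)⁻¹).PosDef := by
  -- the PSD summand
  have hMy : (M + Matrix.diagonal dy).PosDef :=
    hM.add_posSemidef (Matrix.PosSemidef.diagonal fun i => (hdy i).le)
  have hPSD : (L * (M + Matrix.diagonal dy)⁻¹ * Lᵀ).PosSemidef := by
    have := hMy.inv.posSemidef.mul_mul_conjTranspose_same L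
    rwa [conjTranspose_eq_transpose_of_trivial] at this
  -- notation
  set B : Matrix (Fin n) (Fin n) ℝ := (Matrix.diagonal dw)⁻¹ + (Matrix.diagonal dv)⁻¹ with hBdef
  have hB : B.PosDef := (Matrix.PosDef.diagonal hdw).inv.add (Matrix.PosDef.diagonal hdv).inv
  set P : Matrix (Fin n) (Fin n) ℝ := α • M with hPdef
  have hP : P.PosDef := posDef_smul_aux hM hα
  set C : Matrix (Fin n) (Fin n) ℝ := (B⁻¹ + P)⁻¹ with hCdef
  have hBPC : (B⁻¹ + P).PosDef := hB.inv.add hP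
  have hC : C.PosDef := hBPC.inv
  -- basic inverse facts
  have hP'P : P⁻¹ * P = 1 := Matrix.nonsing_inv_mul P (Matrix.isUnit_iff_isUnit_det P |>.mp hP.isUnit)
  have hBB' : B * B⁻¹ = 1 := Matrix.mul_nonsing_inv B (Matrix.isUnit_iff_isUnit_det B |>.mp hB.isUnit)
  have hXC : (B⁻¹ + P) * C = 1 :=
    Matrix.mul_nonsing_inv _ (Matrix.isUnit_iff_isUnit_det _ |>.mp hBPC.isUnit)
  -- P⁻¹ = α⁻¹ • M⁻¹
  have hPinv : α⁻¹ • M⁻¹ = P⁻¹ := by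
    haveI : Invertible α := invertibleOfNonzero hα.ne'
    rw [hPdef, Matrix.inv_smul (A := M) α (Matrix.isUnit_iff_isUnit_det M |>.mp hM.isUnit), invOf_eq_inv]
  -- Woodbury-style identity
  have hkey : B * (P * (C * P)) + C * P = B * P := by
    have h2 : B * (B⁻¹ + P) = 1 + B * P := by rw [mul_add, hBB']
    calc B * (P * (C * P)) + C * P = (1 + B * P) * (C * P) := by noncomm_ring
    _ = B * (B⁻¹ + P) * (C * P) := by rw [h2]
    _ = B * ((B⁻¹ + P) * C) * P := by noncomm_ring
    _ = B * P := by rw [hXC, mul_one]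
  have hinv_id : (B + P⁻¹)⁻¹ = P - P * (C * P) := by
    apply Matrix.inv_eq_right_inv
    calc (B + P⁻¹) * (P - P * (C * P))
        = B * P + P⁻¹ * P - (B * (P * (C * P)) + (P⁻¹ * P) * (C * P)) := by noncomm_ring
      _ = B * P + 1 - (B * (P * (C * P)) + C * P) := by rw [hP'P, one_mul]
      _ = 1 := by rw [hkey]; abel
  -- rewrite the second summand
  have hsq : (α ^ 2)⁻¹ • P = α⁻¹ • M := by
    rw [hPdef, smul_smul]
    congr 1
    field_simp
  have hD_eq : α⁻¹ • M - (α ^ 2)⁻¹ • (B + α⁻¹ • M⁻¹)⁻¹ = (α ^ 2)⁻¹ • (P * (C * P)) := by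
    rw [hPinv, hinv_id, smul_sub, hsq]
    abel
  have hPCP : (P * (C * P)).PosDef := by
    have := posDef_conj_aux' hC hP.isUnit
    rw [hP.isHermitian.eq] at this
    rwa [mul_assoc] at this
  have hD : (α⁻¹ • M - (α ^ 2)⁻¹ • (B + α⁻¹ • M⁻¹)⁻¹).PosDef := by
    rw [hD_eq]
    exact posDef_smul_aux hPCP (by positivity)
  exact ⟨Matrix.PosDef.posSemidef_add hPSD hD, hPSD, hD⟩
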